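/- (Identity (3.33).) For every integer k ≥ 1 and every real x, Σ x^{l_1 + l_2 + ⋯ + l_k} / ( l_1!·l_2!⋯l_k! · 1^{l_1}·2^{l_2}⋯k^{l_k} ) = x·(x+1)·(x+2)⋯(x+k−1) / k!, where the sum runs over all tuples (l_1, …, l_k) of nonnegative integers with l_1 + 2·l_2 + ⋯ + k·l_k = k. -/

import Mathlib

open scoped BigOperators ENNReal
open Filter MeasureTheory

noncomputable section

/-- The finset of tuples `(l 0, ..., l (k-1))` (representing `l_1, ..., l_k`) of nonnegative
integers with `l_1 + 2 l_2 + ⋯ + k l_k = k`. -/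
def bellTuples (k : ℕ) : Finset (Fin k → ℕ) :=
  (Fintype.piFinset fun _ => Finset.range (k + 1)).filter
    (fun l => ∑ i, (i.1 + 1) * l i = k)

/-- Weighted Bell polynomial `M_k(x)` for weights `V_1, V_2, …`. -/
def weightedBell (V : ℕ → ℝ) (k : ℕ) (x : ℝ) : ℝ :=
  (Nat.factorial k : ℝ) * ∑ l ∈ bellTuples k, ∏ i : Fin k,
    (x * V (i.1 + 1)) ^ (l i) /
      ((Nat.factorial (i.1 + 1) : ℝ) ^ (l i) * (Nat.factorial (l i) : ℝ))

/-- Exponential generating function `H(u) = 1 + ∑_{i ≥ 1} V_i u^i / i!` of the weights. -/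
def weightEGF (V : ℕ → ℝ) (u : ℝ) : ℝ :=
  1 + ∑' i : ℕ, V (i + 1) * u ^ (i + 1) / (Nat.factorial (i + 1) : ℝ)

/-- Termwise derivative `H'(u) = ∑_{i ≥ 1} V_i u^{i-1}/(i-1)!`. -/
def weightEGFDeriv (V : ℕ → ℝ) (u : ℝ) : ℝ :=
  ∑' i : ℕ, V (i + 1) * u ^ i / (Nat.factorial i : ℝ)

/-- Termwise second derivative `H''(u)`. -/
def weightEGFDeriv2 (V : ℕ → ℝ) (u : ℝ) : ℝ :=
  ∑' i : ℕ, V (i + 2) * u ^ i / (Nat.factorial i : ℝ)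

/-- `H(u) < ∞` for all `u ∈ [0, u_0)`. -/
def HFinite (V : ℕ → ℝ) (u0 : ℝ≥0∞) : Prop :=
  ∀ u : ℝ, 0 ≤ u → ENNReal.ofReal u < u0 →
    Summable (fun i : ℕ => V (i + 1) * u ^ (i + 1) / (Nat.factorial (i + 1) : ℝ))



def Tset (m n : ℕ) : Finset (Fin m → ℕ) :=
  (Fintype.piFinset fun _ => Finset.range (n + 1)).filter
    (fun l => ∑ i, (i.1 + 1) * l i = n)

noncomputable def Fct (x : ℝ) (i c : ℕ) : ℝ :=
  x ^ c / ((Nat.factorial c : ℝ) * ((i + 1 : ℕ) : ℝ) ^ c)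

noncomputable def fS (x : ℝ) (n : ℕ) : ℝ :=
  ∑ l ∈ Tset n n, ∏ i : Fin n, Fct x i.1 (l i)

lemma mem_Tset {m n : ℕ} {l : Fin m → ℕ} :
    l ∈ Tset m n ↔ ∑ i, (i.1 + 1) * l i = n := by
  constructor
  · intro h; exact (Finset.mem_filter.mp h).2
  · intro h
    refine Finset.mem_filter.mpr ⟨Fintype.mem_piFinset.mpr fun i => ?_, h⟩
    have h1 : (i.1 + 1) * l i ≤ n := h ▸ Finset.single_le_sum
      (f := fun j : Fin m => (j.1 + 1) * l j) (fun j _ => Nat.zero_le _) (Finset.mem_univ i)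
    have : l i ≤ (i.1 + 1) * l i := Nat.le_mul_of_pos_left _ (Nat.succ_pos _)
    simp only [Finset.mem_range]; omega

lemma Fct_zero (x : ℝ) (i : ℕ) : Fct x i 0 = 1 := by simp [Fct]

lemma Tset_vanish {m n : ℕ} {l : Fin m → ℕ} (hl : l ∈ Tset m n) (i : Fin m)
    (hi : n ≤ i.1) : l i = 0 := by
  have h1 : (i.1 + 1) * l i ≤ n := (mem_Tset.mp hl) ▸ Finset.single_le_sum
    (f := fun j : Fin m => (j.1 + 1) * l j) (fun j _ => Nat.zero_le _) (Finset.mem_univ i)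
  by_contra h0
  have h2 : 1 ≤ l i := Nat.pos_of_ne_zero h0
  have : i.1 + 1 ≤ (i.1 + 1) * l i := Nat.le_mul_of_pos_right _ h2
  omega

lemma prod_castLE {M : Type*} [CommMonoid M] {n m : ℕ} (h : n ≤ m) (F : Fin m → M)
    (h1 : ∀ i : Fin m, n ≤ i.1 → F i = 1) :
    ∏ i : Fin m, F i = ∏ i : Fin n, F (Fin.castLE h i) := by
  rw [← Finset.prod_filter_of_ne (f := F) (p := fun i : Fin m => i.1 < n)
      (fun i _ hF => by by_contra hc; exact hF (h1 i (not_lt.mp hc)))]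
  refine Finset.prod_bij' (fun i hi => (⟨i.1, (Finset.mem_filter.mp hi).2⟩ : Fin n))
    (fun i _ => Fin.castLE h i) (fun a ha => Finset.mem_univ _)
    (fun a _ => Finset.mem_filter.mpr ⟨Finset.mem_univ _, a.2⟩)
    (fun a ha => rfl) (fun a ha => rfl) (fun a ha => rfl)

lemma sum_castLE {n m : ℕ} (h : n ≤ m) (F : Fin m → ℕ)
    (h1 : ∀ i : Fin m, n ≤ i.1 → F i = 0) :
    ∑ i : Fin m, F i = ∑ i : Fin n, F (Fin.castLE h i) := by
  rw [← Finset.sum_filter_of_ne (f := F) (p := fun i : Fin m => i.1 < n)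
      (fun i _ hF => by by_contra hc; exact hF (h1 i (not_lt.mp hc)))]
  refine Finset.sum_bij' (fun i hi => (⟨i.1, (Finset.mem_filter.mp hi).2⟩ : Fin n))
    (fun i _ => Fin.castLE h i) (fun a ha => Finset.mem_univ _)
    (fun a _ => Finset.mem_filter.mpr ⟨Finset.mem_univ _, a.2⟩)
    (fun a ha => rfl) (fun a ha => rfl) (fun a ha => rfl)

/-- Stability: the sum over longer tuples with weighted sum `n ≤ m` equals `fS x n`. -/
lemma sum_Tset_eq (x : ℝ) {n m : ℕ} (h : n ≤ m) :
    ∑ l ∈ Tset m n, ∏ i : Fin m, Fct x i.1 (l i) = fS x n := by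
  unfold fS
  refine Finset.sum_bij' (fun l _ => fun a : Fin n => l (Fin.castLE h a))
    (fun l _ => fun a : Fin m => if ha : a.1 < n then l ⟨a.1, ha⟩ else 0)
    ?_ ?_ ?_ ?_ ?_
  · intro l hl
    rw [mem_Tset]
    have hz : ∀ i : Fin m, n ≤ i.1 → (fun i : Fin m => (i.1 + 1) * l i) i = 0 :=
      fun i hi => by simp only [Tset_vanish hl i hi, Nat.mul_zero]
    exact (sum_castLE h (fun i => (i.1 + 1) * l i) hz).symm.trans (mem_Tset.mp hl)
  · intro l hl
    rw [mem_Tset]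
    have hz : ∀ i : Fin m, n ≤ i.1 →
        (fun i : Fin m => (i.1 + 1) * (if ha : i.1 < n then l ⟨i.1, ha⟩ else 0)) i = 0 := by
      intro i hi
      simp only
      rw [dif_neg (by omega), Nat.mul_zero]
    have h2 := sum_castLE h
      (fun i : Fin m => (i.1 + 1) * (if ha : i.1 < n then l ⟨i.1, ha⟩ else 0)) hz
    have h3 : ∑ i : Fin n, (fun i : Fin m =>
        (i.1 + 1) * (if ha : i.1 < n then l ⟨i.1, ha⟩ else 0)) (Fin.castLE h i)
        = ∑ i : Fin n, (i.1 + 1) * l i := by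
      refine Finset.sum_congr rfl fun a _ => ?_
      simp only
      rw [dif_pos (show (Fin.castLE h a).1 < n from a.2)]
      congr 1
    exact (h2.trans h3).trans (mem_Tset.mp hl)
  · intro l hl
    funext a
    by_cases ha : a.1 < n
    · simp only [dif_pos ha]
      exact congrArg l (Fin.ext rfl)
    · simp only [dif_neg ha]; exact (Tset_vanish hl a (not_lt.mp ha)).symm
  · intro l hl
    funext a
    show (if ha : (Fin.castLE h a).1 < n then l ⟨(Fin.castLE h a).1, ha⟩ else 0) = l a
    rw [dif_pos (show (Fin.castLE h a).1 < n from a.2)]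
    exact congrArg l (Fin.ext rfl)
  · intro l hl
    have hz : ∀ i : Fin m, n ≤ i.1 → (fun i : Fin m => Fct x i.1 (l i)) i = 1 :=
      fun i hi => by simp only [Tset_vanish hl i hi, Fct_zero]
    exact prod_castLE h (fun i => Fct x i.1 (l i)) hz

lemma Fct_step (x : ℝ) (jn : ℕ) {c : ℕ} (hc : c ≠ 0) :
    ((jn + 1 : ℕ) : ℝ) * c * Fct x jn c = x * Fct x jn (c - 1) := by
  obtain ⟨d, rfl⟩ := Nat.exists_eq_succ_of_ne_zero hc
  simp only [Fct, Nat.succ_sub_one, Nat.factorial_succ, pow_succ]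
  have h1 : (Nat.factorial d : ℝ) ≠ 0 := Nat.cast_ne_zero.mpr (Nat.factorial_ne_zero d)
  have h2 : ((jn + 1 : ℕ) : ℝ) ≠ 0 := Nat.cast_ne_zero.mpr (Nat.succ_ne_zero jn)
  have h3 : ((jn + 1 : ℕ) : ℝ) ^ d ≠ 0 := pow_ne_zero _ h2
  push_cast
  field_simp

lemma prod_update_split (x : ℝ) {k : ℕ} (j : Fin k) (l : Fin k → ℕ) (c : ℕ) :
    ∏ i : Fin k, Fct x i.1 (Function.update l j c i)
      = Fct x j.1 c * ∏ i ∈ Finset.univ.erase j, Fct x i.1 (l i) := by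
  rw [← Finset.mul_prod_erase Finset.univ (fun i : Fin k => Fct x i.1 (Function.update l j c i))
    (Finset.mem_univ j)]
  rw [Function.update_self]
  congr 1
  refine Finset.prod_congr rfl fun a ha => ?_
  rw [Function.update_of_ne (Finset.ne_of_mem_erase ha)]

lemma sum_update_split {k : ℕ} (j : Fin k) (l : Fin k → ℕ) (c : ℕ) :
    ∑ i : Fin k, (i.1 + 1) * Function.update l j c i
      = (j.1 + 1) * c + ∑ i ∈ Finset.univ.erase j, (i.1 + 1) * l i := by
  rw [← Finset.add_sum_erase Finset.univ (fun i : Fin k => (i.1 + 1) * Function.update l j c i)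
    (Finset.mem_univ j)]
  rw [Function.update_self]
  congr 1
  refine Finset.sum_congr rfl fun a ha => ?_
  rw [Function.update_of_ne (Finset.ne_of_mem_erase ha)]

lemma key_update (x : ℝ) {k : ℕ} (j : Fin k) :
    ∑ l ∈ Tset k k, ((j.1 + 1) * l j : ℕ) * ∏ i : Fin k, Fct x i.1 (l i)
      = x * ∑ l ∈ Tset k (k - (j.1 + 1)), ∏ i : Fin k, Fct x i.1 (l i) := by
  rw [← Finset.sum_filter_of_ne (p := fun l : Fin k → ℕ => l j ≠ 0)
    (fun l _ hv => by
      intro h0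
      apply hv
      rw [h0, Nat.mul_zero, Nat.cast_zero, zero_mul])]
  rw [Finset.mul_sum]
  refine Finset.sum_bij' (fun l _ => Function.update l j (l j - 1))
    (fun l _ => Function.update l j (l j + 1)) ?_ ?_ ?_ ?_ ?_
  · intro l hl
    obtain ⟨hl1, hl2⟩ := Finset.mem_filter.mp hl
    have hsum := mem_Tset.mp hl1
    rw [← Finset.add_sum_erase Finset.univ (fun i : Fin k => (i.1 + 1) * l i)
      (Finset.mem_univ j)] at hsum
    rw [mem_Tset, sum_update_split]
    obtain ⟨d, hd⟩ := Nat.exists_eq_succ_of_ne_zero hl2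
    rw [hd] at hsum ⊢
    simp only [Nat.succ_sub_one]
    have hjk : j.1 + 1 ≤ k := j.2
    rw [show (j.1 + 1) * (d + 1) = (j.1 + 1) * d + (j.1 + 1) from by ring] at hsum
    omega
  · intro l hl
    have hsum := mem_Tset.mp hl
    rw [← Finset.add_sum_erase Finset.univ (fun i : Fin k => (i.1 + 1) * l i)
      (Finset.mem_univ j)] at hsum
    have hjk : j.1 + 1 ≤ k := j.2
    refine Finset.mem_filter.mpr ⟨?_, ?_⟩
    · rw [mem_Tset, sum_update_split,
        show (j.1 + 1) * (l j + 1) = (j.1 + 1) * l j + (j.1 + 1) from by ring]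
      omega
    · show Function.update l j (l j + 1) j ≠ 0
      rw [Function.update_self]
      exact Nat.succ_ne_zero _
  · intro l hl
    have hl2 := (Finset.mem_filter.mp hl).2
    show Function.update (Function.update l j (l j - 1)) j (Function.update l j (l j - 1) j + 1) = l
    rw [Function.update_self, Function.update_idem,
      Nat.sub_add_cancel (Nat.one_le_iff_ne_zero.mpr hl2), Function.update_eq_self]
  · intro l hl
    show Function.update (Function.update l j (l j + 1)) j (Function.update l j (l j + 1) j - 1) = l
    rw [Function.update_self, Function.update_idem, Nat.succ_sub_one, Function.update_eq_self]
  · intro l hl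
    have hl2 := (Finset.mem_filter.mp hl).2
    rw [prod_update_split,
      ← Finset.mul_prod_erase Finset.univ (fun i : Fin k => Fct x i.1 (l i)) (Finset.mem_univ j),
      ← mul_assoc, ← mul_assoc]
    congr 1
    have h := Fct_step x j.1 hl2
    push_cast at h ⊢
    exact h

lemma fS_rec (x : ℝ) (k : ℕ) :
    (k : ℝ) * fS x k = x * ∑ j ∈ Finset.range k, fS x j := by
  have h1 : (k : ℝ) * fS x k = ∑ j : Fin k, x * fS x (k - (j.1 + 1)) := by
    rw [fS, Finset.mul_sum]
    have h2 : ∀ l ∈ Tset k k, (k : ℝ) * ∏ i : Fin k, Fct x i.1 (l i)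
        = ∑ j : Fin k, ((j.1 + 1) * l j : ℕ) * ∏ i : Fin k, Fct x i.1 (l i) := by
      intro l hl
      rw [← Finset.sum_mul]
      congr 1
      rw [← Nat.cast_sum]
      exact_mod_cast congrArg (Nat.cast (R := ℝ)) (mem_Tset.mp hl).symm
    rw [Finset.sum_congr rfl h2, Finset.sum_comm]
    refine Finset.sum_congr rfl fun j _ => ?_
    rw [key_update x j, sum_Tset_eq x (Nat.sub_le k (j.1 + 1))]
  rw [h1, Fin.sum_univ_eq_sum_range (fun j => x * fS x (k - (j + 1))), ← Finset.mul_sum]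
  congr 1
  have h3 : ∀ j, k - (j + 1) = k - 1 - j := fun j => by omega
  rw [Finset.sum_congr rfl (fun j _ => by rw [h3 j])]
  exact Finset.sum_range_reflect (fun j => fS x j) k

lemma fS_zero (x : ℝ) : fS x 0 = 1 := by
  rw [fS]
  have h1 : Tset 0 0 = {fun i : Fin 0 => 0} := by
    apply Finset.eq_singleton_iff_unique_mem.mpr
    constructor
    · rw [mem_Tset]; simp
    · intro l _; funext i; exact i.elim0
  rw [h1, Finset.sum_singleton]
  simp

noncomputable def gR (x : ℝ) (n : ℕ) : ℝ :=
  (∏ i ∈ Finset.range n, (x + i)) / (Nat.factorial n : ℝ)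

lemma gR_rec (x : ℝ) (k : ℕ) :
    x * ∑ j ∈ Finset.range k, gR x j = (k : ℝ) * gR x k := by
  induction k with
  | zero => simp
  | succ k ih =>
    rw [Finset.sum_range_succ, mul_add, ih]
    have hfac : (Nat.factorial k : ℝ) ≠ 0 := Nat.cast_ne_zero.mpr (Nat.factorial_ne_zero k)
    have hfac2 : (Nat.factorial (k + 1) : ℝ) ≠ 0 := Nat.cast_ne_zero.mpr (Nat.factorial_ne_zero _)
    rw [gR, gR, Finset.prod_range_succ]
    rw [show (Nat.factorial (k + 1) : ℝ) = (k + 1) * Nat.factorial k from by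
      rw [Nat.factorial_succ]; push_cast; ring]
    field_simp
    push_cast
    ring

lemma fS_eq_gR (x : ℝ) (k : ℕ) : fS x k = gR x k := by
  induction k using Nat.strong_induction_on with
  | _ k ih =>
    match k with
    | 0 => rw [fS_zero, gR]; simp
    | k + 1 =>
      have hne : ((k + 1 : ℕ) : ℝ) ≠ 0 := Nat.cast_ne_zero.mpr (Nat.succ_ne_zero k)
      have h1 := fS_rec x (k + 1)
      rw [Finset.sum_congr rfl (fun j hj => ih j (Finset.mem_range.mp hj)), gR_rec] at h1
      exact mul_left_cancel₀ hne h1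

/-- identity (3.33): the cycle-index polynomial of the symmetric group equals
the rising factorial divided by `k!`:
`∑ x^{l_1+⋯+l_k}/(l_1!⋯l_k! · 1^{l_1}⋯k^{l_k}) = x(x+1)⋯(x+k−1)/k!`. -/
theorem stmt16 (k : ℕ) (hk : 1 ≤ k) (x : ℝ) :
    ∑ l ∈ bellTuples k,
        x ^ (∑ i, l i) /
          ((∏ i : Fin k, (Nat.factorial (l i) : ℝ)) *
            ∏ i : Fin k, ((i.1 + 1 : ℕ) : ℝ) ^ (l i)) =
      (∏ i ∈ Finset.range k, (x + i)) / (Nat.factorial k : ℝ) := by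
  have hw : ∀ l : Fin k → ℕ,
      x ^ (∑ i, l i) /
          ((∏ i : Fin k, (Nat.factorial (l i) : ℝ)) *
            ∏ i : Fin k, ((i.1 + 1 : ℕ) : ℝ) ^ (l i))
        = ∏ i : Fin k, Fct x i.1 (l i) := by
    intro l
    unfold Fct
    rw [Finset.prod_div_distrib, Finset.prod_mul_distrib, Finset.prod_pow_eq_pow_sum]
  rw [Finset.sum_congr rfl (fun l _ => hw l)]
  exact fS_eq_gR x k

end
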